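/- Let (C,Δ,ε) be a comonoid in M and let P be an object of M. The following are equivalent: (i) there exists a morphism λ : P⊗C → C⊗(P⊗C) making P⊗C a C-bicomodule whose right C-coaction is P⊗Δ, i.e. λ satisfies (ε⊗id_{P⊗C})∘λ = id_{P⊗C}, (C⊗λ)∘λ = (Δ⊗(P⊗C))∘λ, and (C⊗(P⊗Δ))∘λ = (λ⊗C)∘(P⊗Δ); (ii) there exists a morphism 𝔭 : P⊗C → C⊗P satisfying (Δ⊗P)∘𝔭 = (C⊗𝔭)∘(𝔭⊗C)∘(P⊗Δ) and (ε⊗P)∘𝔭 = P⊗ε. -/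
import Mathlib


open CategoryTheory MonoidalCategory

/-- Lemma 1.4: for a comonoid `(C, Δ, ε)` and an object `P`, the existence of a
`C`-bicomodule structure on `P ⊗ C` whose right coaction is `P ◁ Δ` is equivalent to the
existence of an entwining `P ⊗ C ⟶ C ⊗ P`. -/
theorem stmt_1 {M : Type*} [Category M] [MonoidalCategory M]
    (C P : M) (Δ : C ⟶ C ⊗ C) (ε : C ⟶ 𝟙_ M)
    (hcounit_l : Δ ≫ (ε ▷ C) = (λ_ C).inv)
    (hcounit_r : Δ ≫ (C ◁ ε) = (ρ_ C).inv)
    (hcoassoc : Δ ≫ (Δ ▷ C) ≫ (α_ C C C).hom = Δ ≫ (C ◁ Δ)) :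
    (∃ lam : P ⊗ C ⟶ C ⊗ (P ⊗ C),
        lam ≫ (ε ▷ (P ⊗ C)) = (λ_ (P ⊗ C)).inv ∧
        lam ≫ (C ◁ lam) = lam ≫ (Δ ▷ (P ⊗ C)) ≫ (α_ C C (P ⊗ C)).hom ∧
        lam ≫ (C ◁ (P ◁ Δ)) =
          (P ◁ Δ) ≫ (α_ P C C).inv ≫ (lam ▷ C) ≫ (α_ C (P ⊗ C) C).hom ≫
            (C ◁ (α_ P C C).hom)) ↔
    (∃ p : P ⊗ C ⟶ C ⊗ P,
        p ≫ (Δ ▷ P) =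
          (P ◁ Δ) ≫ (α_ P C C).inv ≫ (p ▷ C) ≫ (α_ C P C).hom ≫
            (C ◁ p) ≫ (α_ C C P).inv ∧
        p ≫ (ε ▷ P) ≫ (λ_ P).hom = (P ◁ ε) ≫ (ρ_ P).hom) := by
  constructor
  · rintro ⟨lam, h1, h2, h3⟩
    set p : P ⊗ C ⟶ C ⊗ P := lam ≫ (C ◁ ((P ◁ ε) ≫ (ρ_ P).hom)) with hp
    have B2 : p ≫ (ε ▷ P) ≫ (λ_ P).hom = (P ◁ ε) ≫ (ρ_ P).hom := by
      rw [hp, Category.assoc, whisker_exchange_assoc, reassoc_of% h1]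
      simp only [MonoidalCategory.whiskerLeft_comp, Category.assoc]
      monoidal
    have L : lam = (P ◁ Δ) ≫ (α_ P C C).inv ≫ (p ▷ C) ≫ (α_ C P C).hom := by
      calc lam = lam ≫ (C ◁ (P ◁ (Δ ≫ (ε ▷ C) ≫ (λ_ C).hom))) := by
            rw [reassoc_of% hcounit_l]; simp
        _ = (lam ≫ (C ◁ (P ◁ Δ))) ≫ (C ◁ (P ◁ (ε ▷ C))) ≫ (C ◁ (P ◁ (λ_ C).hom)) := by
            simp
        _ = ((P ◁ Δ) ≫ (α_ P C C).inv ≫ (lam ▷ C) ≫ (α_ C (P ⊗ C) C).hom ≫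
              (C ◁ (α_ P C C).hom)) ≫ (C ◁ (P ◁ (ε ▷ C))) ≫ (C ◁ (P ◁ (λ_ C).hom)) := by
            rw [h3]
        _ = (P ◁ Δ) ≫ (α_ P C C).inv ≫ (p ▷ C) ≫ (α_ C P C).hom := by
            rw [hp]
            simp only [comp_whiskerRight, MonoidalCategory.whiskerLeft_comp, Category.assoc]
            monoidal
    have B1 : p ≫ (Δ ▷ P) =
        (P ◁ Δ) ≫ (α_ P C C).inv ≫ (p ▷ C) ≫ (α_ C P C).hom ≫
          (C ◁ p) ≫ (α_ C C P).inv := by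
      have h2' : lam ≫ (Δ ▷ (P ⊗ C)) = lam ≫ (C ◁ lam) ≫ (α_ C C (P ⊗ C)).inv := by
        rw [← cancel_mono (α_ C C (P ⊗ C)).hom]; simp [h2]
      conv_lhs =>
        rw [hp, Category.assoc, whisker_exchange, reassoc_of% h2']
        rw [← associator_inv_naturality_right, ← MonoidalCategory.whiskerLeft_comp_assoc,
          ← hp]
      conv_lhs => rw [L]
      simp only [Category.assoc]
    exact ⟨p, B1, B2⟩
  · rintro ⟨p, hp1, hp2⟩
    refine ⟨(P ◁ Δ) ≫ (α_ P C C).inv ≫ (p ▷ C) ≫ (α_ C P C).hom, ?_, ?_, ?_⟩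
    · have hp2' : p ≫ (ε ▷ P) = (P ◁ ε) ≫ (ρ_ P).hom ≫ (λ_ P).inv := by
        rw [← cancel_mono (λ_ P).hom]; simp [hp2]
      simp only [Category.assoc]
      rw [← associator_naturality_left, ← comp_whiskerRight_assoc, hp2']
      simp only [comp_whiskerRight, Category.assoc, whisker_exchange_assoc]
      rw [← associator_inv_naturality_middle_assoc, ← MonoidalCategory.whiskerLeft_comp_assoc,
        hcounit_l]
      monoidal
    · conv_rhs =>
        simp only [Category.assoc]
        rw [← associator_naturality_left_assoc, ← comp_whiskerRight_assoc, hp1]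
      conv_lhs =>
        simp only [MonoidalCategory.whiskerLeft_comp, Category.assoc]
        rw [← associator_naturality_right_assoc, ← whisker_exchange_assoc,
          ← associator_inv_naturality_right_assoc, ← MonoidalCategory.whiskerLeft_comp_assoc,
          ← hcoassoc]
      simp only [MonoidalCategory.whiskerLeft_comp, Category.assoc, comp_whiskerRight]
      monoidal
    · simp only [Category.assoc]
      rw [← associator_naturality_right, ← whisker_exchange_assoc,
        ← associator_inv_naturality_right_assoc, ← MonoidalCategory.whiskerLeft_comp_assoc,
        ← hcoassoc]
      simp only [MonoidalCategory.whiskerLeft_comp, Category.assoc, comp_whiskerRight]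
      monoidal
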